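/- Let {G_β^α : α, β ∈ ℤ} be a bidirect system of complex vector spaces (inverse system in the lower index β, direct system in the upper index α, all squares commuting) such that dim_ℂ G_β^α ≤ C for a constant C independent of α, β. For fixed β set G_β = colim_α G_β^α with canonical maps κ_β^α : G_β^α → G_β, and let Ker_β^α = ker κ_β^α and coKer_β^α = coker κ_β^α, which inherit bidirect-system structures. Then there is an exact sequence of complex vector spaces 0 → colim_α lim_β Ker_β^α → colim_α lim_β G_β^α → lim_β colim_α G_β^α → colim_α lim_β coKer_β^α → 0, in which the middle map is the canonical interchange map κ. -/

import Mathlib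

set_option maxHeartbeats 1600000
set_option synthInstance.maxHeartbeats 1000000


/-- A bidirect system of complex vector spaces indexed by `ℤ`: for each fixed lower index `β`
a direct system in the upper index `α`, for each fixed `α` an inverse system in `β`, with all
squares commuting. -/
structure BidirectSystem where
  /-- the spaces `G_β^α` (first index `α`, second index `β`) -/
  G : ℤ → ℤ → Type
  [acg : ∀ α β, AddCommGroup (G α β)]
  [mod : ∀ α β, Module ℂ (G α β)]
  /-- the direct-system maps raising the upper index -/
  ι : ∀ {α α' : ℤ}, α ≤ α' → ∀ β, G α β →ₗ[ℂ] G α' β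
  /-- the inverse-system maps lowering the lower index -/
  π : ∀ (α : ℤ) {β β' : ℤ}, β ≤ β' → G α β' →ₗ[ℂ] G α β
  ι_id : ∀ (α β : ℤ) (x : G α β), ι (le_refl α) β x = x
  ι_comp : ∀ {α α' α'' : ℤ} (h : α ≤ α') (h' : α' ≤ α'') (β : ℤ) (x : G α β),
    ι h' β (ι h β x) = ι (h.trans h') β x
  π_id : ∀ (α β : ℤ) (x : G α β), π α (le_refl β) x = x
  π_comp : ∀ (α : ℤ) {β β' β'' : ℤ} (h : β ≤ β') (h' : β' ≤ β'') (x : G α β''),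
    π α h (π α h' x) = π α (h.trans h') x
  square : ∀ {α α' : ℤ} (h : α ≤ α') {β β' : ℤ} (h' : β ≤ β') (x : G α β'),
    ι h β (π α h' x) = π α' h' (ι h β' x)

attribute [instance] BidirectSystem.acg BidirectSystem.mod

namespace BidirectSystem

variable (S : BidirectSystem)

/-- The direct system of `G_β^•` at fixed lower index `β`. -/
def fam (β : ℤ) : ∀ (a b : ℤ), a ≤ b → S.G a β →ₗ[ℂ] S.G b β := fun _ _ h => S.ι h β

/-- `colim_α G_β^α`. -/
def colimUpper (β : ℤ) : Type := Module.DirectLimit (fun α => S.G α β) (S.fam β)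

noncomputable instance (β : ℤ) : AddCommGroup (S.colimUpper β) :=
  inferInstanceAs (AddCommGroup (Module.DirectLimit _ _))

noncomputable instance (β : ℤ) : Module ℂ (S.colimUpper β) :=
  inferInstanceAs (Module ℂ (Module.DirectLimit _ _))

/-- The canonical map `G_β^α → colim_α G_β^α`. -/
noncomputable def toColim (α β : ℤ) : S.G α β →ₗ[ℂ] S.colimUpper β :=
  Module.DirectLimit.of ℂ ℤ (fun α => S.G α β) (S.fam β) α

/-- `lim_β G_β^α`: the coherent families in the product. -/
def lowerLim (α : ℤ) : Submodule ℂ (∀ β, S.G α β) where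
  carrier := {g | ∀ (β β' : ℤ) (h : β ≤ β'), S.π α h (g β') = g β}
  add_mem' := by
    intro x y hx hy β β' h
    simp only [Pi.add_apply, map_add, hx β β' h, hy β β' h]
  zero_mem' := by
    intro β β' h
    simp only [Pi.zero_apply, map_zero]
  smul_mem' := by
    intro c x hx β β' h
    simp only [Pi.smul_apply, map_smul, hx β β' h]

/-- The map `lim_β G_β^α → lim_β G_β^{α'}` induced by the `ι`. -/
noncomputable def lowerLimMap {α α' : ℤ} (h : α ≤ α') : S.lowerLim α →ₗ[ℂ] S.lowerLim α' where
  toFun g := ⟨fun β => S.ι h β (g.val β), by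
    intro β β' h'
    rw [← S.square h h' (g.val β'), g.prop β β' h']⟩
  map_add' g g' := by
    apply Subtype.ext
    funext β
    simp [map_add]
  map_smul' c g := by
    apply Subtype.ext
    funext β
    simp [map_smul]

/-- The map `colim_α G_{β'}^α → colim_α G_β^α` induced by the `π`. -/
noncomputable def colimUpperMap {β β' : ℤ} (h : β ≤ β') :
    S.colimUpper β' →ₗ[ℂ] S.colimUpper β :=
  Module.DirectLimit.lift ℂ ℤ (fun α => S.G α β') (S.fam β')
    (fun α => (S.toColim α β).comp (S.π α h))
    (by
      intro i j hij x
      show S.toColim j β (S.π j h (S.ι hij β' x)) = S.toColim i β (S.π i h x)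
      rw [← S.square hij h x]
      exact Module.DirectLimit.of_f (hij := hij))

/-- `lim_β colim_α G_β^α`. -/
noncomputable def limColim : Submodule ℂ (∀ β, S.colimUpper β) where
  carrier := {g | ∀ (β β' : ℤ) (h : β ≤ β'), S.colimUpperMap h (g β') = g β}
  add_mem' := by
    intro x y hx hy β β' h
    simp only [Pi.add_apply, map_add, hx β β' h, hy β β' h]
  zero_mem' := by
    intro β β' h
    simp only [Pi.zero_apply, map_zero]
  smul_mem' := by
    intro c x hx β β' h
    simp only [Pi.smul_apply, map_smul, hx β β' h]

/-- The map `lim_β G_β^α → lim_β colim_α G_β^α`. -/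
noncomputable def lowerLimToLimColim (α : ℤ) : S.lowerLim α →ₗ[ℂ] S.limColim where
  toFun g := ⟨fun β => S.toColim α β (g.val β), by
    intro β β' h
    have h1 : S.colimUpperMap h (S.toColim α β' (g.val β')) =
        (S.toColim α β) (S.π α h (g.val β')) :=
      Module.DirectLimit.lift_of _ _ _
    rw [h1, g.prop β β' h]⟩
  map_add' g g' := by
    apply Subtype.ext
    funext β
    simp [map_add]
  map_smul' c g := by
    apply Subtype.ext
    funext β
    simp [map_smul]

/-- The canonical interchange map `κ : colim_α lim_β G_β^α → lim_β colim_α G_β^α`. -/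
noncomputable def kappa :
    Module.DirectLimit (fun α => S.lowerLim α) (fun _ _ h => S.lowerLimMap h) →ₗ[ℂ]
      S.limColim :=
  Module.DirectLimit.lift ℂ ℤ (fun α => S.lowerLim α) (fun _ _ h => S.lowerLimMap h)
    (fun α => S.lowerLimToLimColim α)
    (by
      intro i j hij g
      apply Subtype.ext
      funext β
      simp only [lowerLimToLimColim, lowerLimMap, LinearMap.coe_mk, AddHom.coe_mk, toColim]
      exact Module.DirectLimit.of_f (hij := hij))

lemma colimUpperMap_of {α β β' : ℤ} (h : β ≤ β') (x : S.G α β') :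
    S.colimUpperMap h (S.toColim α β' x) = S.toColim α β (S.π α h x) :=
  Module.DirectLimit.lift_of _ _ _

lemma colimUpperMap_id (β : ℤ) (z : S.colimUpper β) :
    S.colimUpperMap (le_refl β) z = z := by
  refine Module.DirectLimit.induction_on z ?_
  intro α x
  show S.colimUpperMap (le_refl β) (S.toColim α β x) = S.toColim α β x
  refine (S.colimUpperMap_of (le_refl β) x).trans ?_
  exact congrArg (S.toColim α β) (S.π_id α β x)

lemma colimUpperMap_comp {β β' β'' : ℤ} (h : β ≤ β') (h' : β' ≤ β'') (z : S.colimUpper β'') :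
    S.colimUpperMap h (S.colimUpperMap h' z) = S.colimUpperMap (h.trans h') z := by
  refine Module.DirectLimit.induction_on z ?_
  intro α x
  show S.colimUpperMap h (S.colimUpperMap h' (S.toColim α β'' x)) =
    S.colimUpperMap (h.trans h') (S.toColim α β'' x)
  refine (congrArg (S.colimUpperMap h) (S.colimUpperMap_of h' x)).trans ?_
  refine (S.colimUpperMap_of h (S.π α h' x)).trans ?_
  refine (congrArg (S.toColim α β) (S.π_comp α h h' x)).trans ?_
  exact (S.colimUpperMap_of (h.trans h') x).symm

/-- `colim_α lim_β` of a bidirect system. -/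
noncomputable def colimLim (T : BidirectSystem) : Type :=
  Module.DirectLimit (fun α => T.lowerLim α) (fun _ _ h => T.lowerLimMap h)

noncomputable instance (T : BidirectSystem) : AddCommGroup (colimLim T) :=
  inferInstanceAs (AddCommGroup (Module.DirectLimit _ _))

noncomputable instance (T : BidirectSystem) : Module ℂ (colimLim T) :=
  inferInstanceAs (Module ℂ (Module.DirectLimit _ _))

/-- The bidirect system of kernels `Ker_β^α = ker (κ_β^α : G_β^α → colim_α G_β^α)`. -/
noncomputable def kerSystem (T : BidirectSystem) : BidirectSystem where
  G α β := LinearMap.ker (T.toColim α β)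
  ι {α α'} h β :=
    (T.ι h β).restrict (p := LinearMap.ker (T.toColim α β))
      (q := LinearMap.ker (T.toColim α' β)) (by
        intro x hx
        simp only [LinearMap.mem_ker] at hx ⊢
        have h1 : T.toColim α' β (T.ι h β x) = T.toColim α β x := Module.DirectLimit.of_f
        rw [h1, hx])
  π α {β β'} h :=
    (T.π α h).restrict (p := LinearMap.ker (T.toColim α β'))
      (q := LinearMap.ker (T.toColim α β)) (by
        intro x hx
        simp only [LinearMap.mem_ker] at hx ⊢
        rw [← T.colimUpperMap_of h x, hx, map_zero])
  ι_id := by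
    intro α β x
    apply Subtype.ext
    simp [LinearMap.restrict_apply, BidirectSystem.ι_id]
  ι_comp := by
    intro α α' α'' h h' β x
    apply Subtype.ext
    simp [LinearMap.restrict_apply, BidirectSystem.ι_comp]
  π_id := by
    intro α β x
    apply Subtype.ext
    simp [LinearMap.restrict_apply, BidirectSystem.π_id]
  π_comp := by
    intro α β β' β'' h h' x
    apply Subtype.ext
    simp [LinearMap.restrict_apply, BidirectSystem.π_comp]
  square := by
    intro α α' h β β' h' x
    apply Subtype.ext
    simp [LinearMap.restrict_apply, BidirectSystem.square]

/-- The bidirect system of cokernels `coKer_β^α = colim_α G_β^α ⧸ im (κ_β^α)`. -/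
noncomputable def cokerSystem (T : BidirectSystem) : BidirectSystem where
  G α β := T.colimUpper β ⧸ LinearMap.range (T.toColim α β)
  ι {α α'} h β :=
    Submodule.mapQ _ _ LinearMap.id (by
      rintro x ⟨y, rfl⟩
      simp only [Submodule.mem_comap, LinearMap.id_apply, LinearMap.mem_range]
      exact ⟨T.ι h β y, Module.DirectLimit.of_f⟩)
  π α {β β'} h :=
    Submodule.mapQ _ _ (T.colimUpperMap h) (by
      rintro x ⟨y, rfl⟩
      simp only [Submodule.mem_comap, LinearMap.mem_range]
      exact ⟨T.π α h y, (T.colimUpperMap_of h y).symm⟩)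
  ι_id := by
    intro α β x
    obtain ⟨y, rfl⟩ := Submodule.Quotient.mk_surjective _ x
    simp [Submodule.mapQ_apply]
  ι_comp := by
    intro α α' α'' h h' β x
    obtain ⟨y, rfl⟩ := Submodule.Quotient.mk_surjective _ x
    simp [Submodule.mapQ_apply]
  π_id := by
    intro α β x
    obtain ⟨y, rfl⟩ := Submodule.Quotient.mk_surjective _ x
    simp [Submodule.mapQ_apply, T.colimUpperMap_id]
  π_comp := by
    intro α β β' β'' h h' x
    obtain ⟨y, rfl⟩ := Submodule.Quotient.mk_surjective _ x
    simp [Submodule.mapQ_apply, T.colimUpperMap_comp]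
  square := by
    intro α α' h β β' h' x
    obtain ⟨y, rfl⟩ := Submodule.Quotient.mk_surjective _ x
    simp [Submodule.mapQ_apply]

end BidirectSystem

/-! ### Auxiliary machinery: Mittag-Leffler for `ℤ`-towers of finite-dimensional spaces -/

private lemma coset_chain_stab {V : Type} [AddCommGroup V] [Module ℂ V] [FiniteDimensional ℂ V]
    (T : ℕ → Set V)
    (hco : ∀ n, ∃ (x : V) (W : Submodule ℂ V), x ∈ T n ∧ T n = {y | y - x ∈ W})
    (hmono : ∀ n, T (n + 1) ⊆ T n) :
    (⋂ n, T n).Nonempty := by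
  classical
  choose x W hx hTW using hco
  have hT : Antitone T := antitone_nat_of_succ_le hmono
  have hWmono : ∀ n, W (n + 1) ≤ W n := by
    intro n w hw
    have h1 : x (n + 1) + w ∈ T n := hmono n (by rw [hTW (n + 1)]; simpa using hw)
    have h2 : x (n + 1) ∈ T n := hmono n (hx (n + 1))
    rw [hTW n] at h1 h2
    have := (W n).sub_mem h1 h2
    simpa using this
  have hW : Antitone W := antitone_nat_of_succ_le hWmono
  obtain ⟨N, hN⟩ : ∃ N, Module.finrank ℂ (W N) =
      sInf (Set.range fun n => Module.finrank ℂ (W n)) := by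
    have : sInf (Set.range fun n => Module.finrank ℂ (W n)) ∈
        Set.range fun n => Module.finrank ℂ (W n) :=
      Nat.sInf_mem ⟨Module.finrank ℂ (W 0), 0, rfl⟩
    obtain ⟨N, hN⟩ := this
    exact ⟨N, hN⟩
  have hWeq : ∀ n, N ≤ n → W n = W N := by
    intro n hn
    refine Submodule.eq_of_le_of_finrank_le (hW hn) ?_
    rw [hN]
    exact Nat.sInf_le ⟨n, rfl⟩
  have hTeq : ∀ n, N ≤ n → T n = T N := by
    intro n hn
    have hxn : x n ∈ T N := hT hn (hx n)
    rw [hTW N] at hxn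
    ext y
    rw [hTW n, hTW N, hWeq n hn]
    constructor
    · intro hy
      have := (W N).add_mem hy hxn
      simpa [sub_add_sub_cancel] using this
    · intro hy
      have := (W N).sub_mem hy hxn
      simpa [sub_sub_sub_cancel_right] using this
  refine ⟨x N, Set.mem_iInter.2 fun n => ?_⟩
  rcases le_total n N with h | h
  · exact hT h (hx N)
  · rw [hTeq n h]; exact hx N

private lemma ml_solve (V : ℤ → Type) [∀ β, AddCommGroup (V β)] [∀ β, Module ℂ (V β)]
    [∀ β, FiniteDimensional ℂ (V β)]
    (p : ∀ β : ℤ, V (β + 1) →ₗ[ℂ] V β) (d : ∀ β, V β) :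
    ∃ r : ∀ β, V β, ∀ β : ℤ, 0 ≤ β → r β = d β + p β (r (β + 1)) := by
  classical
  let Φ : ℕ → ∀ β : ℤ, Set (V β) := fun n =>
    Nat.rec (fun _ => Set.univ) (fun _ ih β => (fun z => d β + p β z) '' ih (β + 1)) n
  have hΦs : ∀ (n : ℕ) (β : ℤ), Φ (n + 1) β = (fun z => d β + p β z) '' Φ n (β + 1) :=
    fun _ _ => rfl
  have hmono : ∀ (n : ℕ) (β : ℤ), Φ (n + 1) β ⊆ Φ n β := by
    intro n
    induction n with
    | zero => exact fun β => Set.subset_univ _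
    | succ n ih =>
      intro β
      rw [hΦs (n + 1) β, hΦs n β]
      exact Set.image_mono (ih (β + 1))
  have hco : ∀ (n : ℕ) (β : ℤ), ∃ (x : V β) (W : Submodule ℂ (V β)),
      x ∈ Φ n β ∧ Φ n β = {y | y - x ∈ W} := by
    intro n
    induction n with
    | zero =>
      intro β
      exact ⟨0, ⊤, trivial, by ext y; exact ⟨fun _ => by simp, fun _ => trivial⟩⟩
    | succ n ih =>
      intro β
      obtain ⟨x, W, hx, hW⟩ := ih (β + 1)
      refine ⟨d β + p β x, W.map (p β), ⟨x, hx, rfl⟩, ?_⟩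
      ext y
      constructor
      · rintro ⟨z, hz, rfl⟩
        have hz' : z ∈ Φ n (β + 1) := hz
        rw [hW] at hz'
        refine Set.mem_setOf_eq ▸ Submodule.mem_map.2 ⟨z - x, hz', ?_⟩
        rw [map_sub, add_sub_add_left_eq_sub]
      · intro hy
        obtain ⟨w, hw, hww⟩ := Submodule.mem_map.1 hy
        refine ⟨x + w, ?_, ?_⟩
        · show x + w ∈ Φ n (β + 1)
          rw [hW]; simpa using hw
        · show d β + p β (x + w) = y
          rw [map_add, hww]; abel
  have hstep : ∀ β : ℤ, ∀ x ∈ ⋂ n, Φ n β, ∃ y, y ∈ (⋂ n, Φ n (β + 1)) ∧ x = d β + p β y := by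
    intro β x hx
    set U : ℕ → Set (V (β + 1)) := fun n => Φ n (β + 1) ∩ {z | d β + p β z = x} with hU
    have hUne : ∀ n, (U n).Nonempty := by
      intro n
      have h1 := Set.mem_iInter.mp hx (n + 1)
      rw [hΦs] at h1
      obtain ⟨z, hz, hzz⟩ := h1
      exact ⟨z, hz, hzz⟩
    have hUmono : ∀ n, U (n + 1) ⊆ U n :=
      fun n => Set.inter_subset_inter_left _ (hmono n (β + 1))
    have hUco : ∀ n, ∃ (x₀ : V (β + 1)) (W : Submodule ℂ (V (β + 1))),
        x₀ ∈ U n ∧ U n = {y | y - x₀ ∈ W} := by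
      intro n
      obtain ⟨x₀, hx₀⟩ := hUne n
      obtain ⟨x', W, hx', hW⟩ := hco n (β + 1)
      obtain ⟨hx₀Φ, hx₀p⟩ := hx₀
      rw [hW] at hx₀Φ
      refine ⟨x₀, W ⊓ LinearMap.ker (p β), ⟨by rw [hW]; exact hx₀Φ, hx₀p⟩, ?_⟩
      ext y
      simp only [hU, Set.mem_inter_iff, Set.mem_setOf_eq, Submodule.mem_inf,
        LinearMap.mem_ker, hW]
      constructor
      · rintro ⟨h1, h2⟩
        constructor
        · have := W.sub_mem h1 hx₀Φ
          simpa [sub_sub_sub_cancel_right] using this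
        · rw [map_sub, sub_eq_zero]
          exact add_left_cancel (h2.trans (Set.mem_setOf_eq ▸ hx₀p).symm)
      · rintro ⟨h1, h2⟩
        rw [map_sub, sub_eq_zero] at h2
        constructor
        · have := W.add_mem h1 hx₀Φ
          simpa [sub_add_sub_cancel] using this
        · rw [h2]
          exact hx₀p
    obtain ⟨y, hy⟩ := coset_chain_stab U hUco hUmono
    have h1 := Set.mem_iInter.mp hy
    exact ⟨y, Set.mem_iInter.2 fun n => (h1 n).1, ((h1 0).2).symm⟩
  obtain ⟨x0, hx0⟩ := coset_chain_stab (fun n => Φ n 0) (fun n => hco n 0) (fun n => hmono n 0)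
  choose nxt hnxt1 hnxt2 using hstep
  let u : (n : ℕ) → {z : V ((n : ℕ) : ℤ) // z ∈ ⋂ m, Φ m ((n : ℕ) : ℤ)} := fun n =>
    Nat.rec ⟨x0, hx0⟩ (fun n ih => ⟨nxt (n : ℤ) ih.1 ih.2, (hnxt1 (n : ℤ) ih.1 ih.2)⟩) n
  refine ⟨fun β => if h : 0 ≤ β then cast (congrArg V (Int.toNat_of_nonneg h)) (u β.toNat).1
    else 0, ?_⟩
  intro β hβ
  obtain ⟨n, rfl⟩ : ∃ n : ℕ, (n : ℤ) = β := ⟨β.toNat, Int.toNat_of_nonneg hβ⟩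
  have e1 : (if h : 0 ≤ (n : ℤ) then cast (congrArg V (Int.toNat_of_nonneg h)) (u (n : ℤ).toNat).1
      else 0) = (u n).1 := by
    rw [dif_pos (Int.natCast_nonneg n)]
    exact rfl
  have e2 : (if h : 0 ≤ (n : ℤ) + 1 then
      cast (congrArg V (Int.toNat_of_nonneg h)) (u ((n : ℤ) + 1).toNat).1 else 0) = (u (n + 1)).1 := by
    rw [dif_pos (by omega : (0:ℤ) ≤ (n : ℤ) + 1)]
    exact rfl
  beta_reduce
  rw [e1, e2]
  exact hnxt2 (n : ℤ) (u n).1 (u n).2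

namespace BidirectSystem

variable (S : BidirectSystem)

instance dirSysLowerLim (T : BidirectSystem) :
    DirectedSystem (fun α => T.lowerLim α) (fun _ _ h => T.lowerLimMap h) where
  map_self := by
    intro i x
    apply Subtype.ext; funext β; exact T.ι_id _ _ _
  map_map := by
    intro k j i hij hjk x
    apply Subtype.ext; funext β; exact T.ι_comp _ _ _ _

/-- inclusion of the kernel lower limits into the lower limits -/
noncomputable def kerIncl (α : ℤ) : (kerSystem S).lowerLim α →ₗ[ℂ] S.lowerLim α where
  toFun g := ⟨fun β => (g.val β).val, by
    intro β β' h
    exact congrArg Subtype.val (g.prop β β' h)⟩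
  map_add' g g' := by apply Subtype.ext; funext β; rfl
  map_smul' c g := by apply Subtype.ext; funext β; rfl

/-- the first map of the four-term sequence -/
noncomputable def eOne : colimLim (kerSystem S) →ₗ[ℂ] colimLim S :=
  Module.DirectLimit.lift ℂ ℤ (fun α => (kerSystem S).lowerLim α)
    (fun _ _ h => (kerSystem S).lowerLimMap h)
    (fun α => (Module.DirectLimit.of ℂ ℤ (fun α => S.lowerLim α)
      (fun _ _ h => S.lowerLimMap h) α).comp (S.kerIncl α))
    (by
      intro i j hij x
      have h1 : S.kerIncl j ((kerSystem S).lowerLimMap hij x)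
          = S.lowerLimMap hij (S.kerIncl i x) := by
        apply Subtype.ext; funext β; rfl
      show Module.DirectLimit.of ℂ ℤ (fun α => S.lowerLim α) (fun _ _ h => S.lowerLimMap h) j
          (S.kerIncl j ((kerSystem S).lowerLimMap hij x)) = Module.DirectLimit.of ℂ ℤ
          (fun α => S.lowerLim α) (fun _ _ h => S.lowerLimMap h) i (S.kerIncl i x)
      rw [h1]
      exact Module.DirectLimit.of_f (R := ℂ) (ι := ℤ) (G := fun α => S.lowerLim α)
        (f := fun _ _ h => S.lowerLimMap h) (hij := hij) (x := S.kerIncl i x))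

lemma eOne_of (α : ℤ) (g : (kerSystem S).lowerLim α) :
    S.eOne (Module.DirectLimit.of ℂ ℤ (fun α => (kerSystem S).lowerLim α)
      (fun _ _ h => (kerSystem S).lowerLimMap h) α g)
    = Module.DirectLimit.of ℂ ℤ (fun α => S.lowerLim α)
      (fun _ _ h => S.lowerLimMap h) α (S.kerIncl α g) :=
  Module.DirectLimit.lift_of _ _ _

/-- the map `lim_β colim_α G → lim_β coKer^α` -/
noncomputable def cokerFam (α : ℤ) : S.limColim →ₗ[ℂ] (cokerSystem S).lowerLim α where
  toFun g := ⟨fun β => (Submodule.Quotient.mk (g.val β) :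
      S.colimUpper β ⧸ LinearMap.range (S.toColim α β)), by
    intro β β' h
    show (Submodule.Quotient.mk (S.colimUpperMap h (g.val β')) :
      S.colimUpper β ⧸ LinearMap.range (S.toColim α β)) = _
    rw [g.prop β β' h]⟩
  map_add' g g' := by apply Subtype.ext; funext β; rfl
  map_smul' c g := by apply Subtype.ext; funext β; rfl

/-- the last map of the four-term sequence -/
noncomputable def eThree : S.limColim →ₗ[ℂ] colimLim (cokerSystem S) :=
  (Module.DirectLimit.of ℂ ℤ (fun α => (cokerSystem S).lowerLim α)
    (fun _ _ h => (cokerSystem S).lowerLimMap h) 0).comp (S.cokerFam 0)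

lemma cokerSystem_ι_mk {α α' : ℤ} (h : α ≤ α') (β : ℤ) (x : S.colimUpper β) :
    (cokerSystem S).ι h β (Submodule.Quotient.mk x :
      S.colimUpper β ⧸ LinearMap.range (S.toColim α β))
    = (Submodule.Quotient.mk x : S.colimUpper β ⧸ LinearMap.range (S.toColim α' β)) := rfl

lemma cokerSystem_π_mk (α : ℤ) {β β' : ℤ} (h : β ≤ β') (x : S.colimUpper β') :
    (cokerSystem S).π α h (Submodule.Quotient.mk x :
      S.colimUpper β' ⧸ LinearMap.range (S.toColim α β'))
    = (Submodule.Quotient.mk (S.colimUpperMap h x) :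
      S.colimUpper β ⧸ LinearMap.range (S.toColim α β)) := rfl

lemma kappa_of (α : ℤ) (g : S.lowerLim α) :
    S.kappa (Module.DirectLimit.of ℂ ℤ (fun α => S.lowerLim α)
      (fun _ _ h => S.lowerLimMap h) α g) = S.lowerLimToLimColim α g :=
  Module.DirectLimit.lift_of _ _ _

end BidirectSystem

open BidirectSystem in
/-- For a bidirect system `{G_β^α}` of complex vector spaces indexed by `ℤ`
with `dim_ℂ G_β^α ≤ C` for a constant `C` independent of `α, β`, there is an exact sequence
`0 → colim_α lim_β Ker → colim_α lim_β G → lim_β colim_α G → colim_α lim_β coKer → 0`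
in which the middle map is the canonical interchange map `κ`. -/
theorem four_term_exact_sequence (S : BidirectSystem) (C : ℕ)
    (hdim : ∀ α β : ℤ, Module.rank ℂ (S.G α β) ≤ (C : Cardinal)) :
    ∃ (e₁ : colimLim (kerSystem S) →ₗ[ℂ] colimLim S)
      (e₃ : S.limColim →ₗ[ℂ] colimLim (cokerSystem S)),
      Function.Injective e₁ ∧
      Function.Exact e₁ S.kappa ∧
      Function.Exact S.kappa e₃ ∧
      Function.Surjective e₃ := by
  classical
  haveI hfd : ∀ α β : ℤ, FiniteDimensional ℂ (S.G α β) := fun α β =>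
    Module.rank_lt_aleph0_iff.mp ((hdim α β).trans_lt (Cardinal.nat_lt_aleph0 C))
  refine ⟨S.eOne, S.eThree, ?_, ?_, ?_, ?_⟩
  · -- injectivity of e₁
    rw [injective_iff_map_eq_zero]
    intro z
    refine Module.DirectLimit.induction_on z ?_
    intro α g hz
    rw [S.eOne_of] at hz
    obtain ⟨α', hαα', hg⟩ := Module.DirectLimit.of.zero_exact hz
    have hg0 : (kerSystem S).lowerLimMap hαα' g = 0 := by
      apply Subtype.ext; funext β
      apply Subtype.ext
      exact congrFun (congrArg Subtype.val hg) β
    have h1 : Module.DirectLimit.of ℂ ℤ (fun α => (kerSystem S).lowerLim α)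
        (fun _ _ h => (kerSystem S).lowerLimMap h) α g
        = Module.DirectLimit.of ℂ ℤ (fun α => (kerSystem S).lowerLim α)
        (fun _ _ h => (kerSystem S).lowerLimMap h) α'
          ((kerSystem S).lowerLimMap hαα' g) := (Module.DirectLimit.of_f (hij := hαα')).symm
    rw [h1, hg0, map_zero]
    rfl
  · -- exactness at colim lim G
    intro y
    constructor
    · -- ker κ ⊆ range e₁
      refine Module.DirectLimit.induction_on y ?_
      intro α g hy
      rw [S.kappa_of] at hy
      have hz : ∀ β, S.toColim α β (g.val β) = 0 := fun β =>
        congrFun (congrArg Subtype.val hy) β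
      refine ⟨Module.DirectLimit.of ℂ ℤ (fun α => (kerSystem S).lowerLim α)
        (fun _ _ h => (kerSystem S).lowerLimMap h) α
        ⟨fun β => ⟨g.val β, LinearMap.mem_ker.2 (hz β)⟩, ?_⟩, ?_⟩
      · intro β β' h
        apply Subtype.ext
        exact g.prop β β' h
      · rw [S.eOne_of]
        congr 1
    · -- κ ∘ e₁ = 0
      rintro ⟨x, rfl⟩
      refine Module.DirectLimit.induction_on x ?_
      intro α g
      rw [S.eOne_of, S.kappa_of]
      apply Subtype.ext; funext β
      exact (g.val β).prop
  · -- exactness at lim colim G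
    intro y
    constructor
    · -- ker e₃ ⊆ range κ
      intro hy
      have hy' : Module.DirectLimit.of ℂ ℤ (fun α => (cokerSystem S).lowerLim α)
          (fun _ _ h => (cokerSystem S).lowerLimMap h) 0 (S.cokerFam 0 y) = 0 := hy
      obtain ⟨α, h0α, hc⟩ := Module.DirectLimit.of.zero_exact hy'
      have hmem : ∀ β, y.val β ∈ LinearMap.range (S.toColim α β) := by
        intro β
        have h1 : (cokerSystem S).ι h0α β ((S.cokerFam 0 y).val β) = 0 :=
          congrFun (congrArg Subtype.val hc) β
        rw [show (S.cokerFam 0 y).val β = (Submodule.Quotient.mk (y.val β) :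
            S.colimUpper β ⧸ LinearMap.range (S.toColim 0 β)) from rfl,
          S.cokerSystem_ι_mk] at h1
        exact (Submodule.Quotient.mk_eq_zero _).mp h1
      choose x' hx' using hmem
      have hker : ∀ β : ℤ, S.π α (by omega : β ≤ β + 1) (x' (β + 1)) - x' β ∈
          LinearMap.ker (S.toColim α β) := by
        intro β
        rw [LinearMap.mem_ker, map_sub]
        rw [show S.toColim α β (S.π α (by omega : β ≤ β + 1) (x' (β + 1)))
            = S.colimUpperMap (by omega : β ≤ β + 1) (S.toColim α (β + 1) (x' (β + 1))) from
          (S.colimUpperMap_of _ _).symm, hx', hx', y.prop β (β + 1) (by omega), sub_self]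
      obtain ⟨r, hr⟩ := ml_solve (fun β => LinearMap.ker (S.toColim α β))
        (fun β => (S.π α (by omega : β ≤ β + 1)).restrict (fun z hz => by
          rw [LinearMap.mem_ker] at hz ⊢
          rw [show S.toColim α β (S.π α (by omega : β ≤ β + 1) z)
              = S.colimUpperMap (by omega : β ≤ β + 1) (S.toColim α (β + 1) z) from
            (S.colimUpperMap_of _ _).symm, hz, map_zero]))
        (fun β => ⟨_, hker β⟩)
      obtain ⟨x, hxpos, hxneg⟩ : ∃ x : ∀ β : ℤ, S.G α β,
          (∀ β : ℤ, 0 ≤ β → x β = x' β + (r β).val) ∧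
          (∀ β : ℤ, ∀ h : β ≤ 0, x β = S.π α h (x' 0 + (r 0).val)) := by
        refine ⟨fun β => if h : 0 ≤ β then x' β + (r β).val
          else S.π α (le_of_not_ge h) (x' 0 + (r 0).val), fun β h => dif_pos h, ?_⟩
        intro β h
        beta_reduce
        rcases eq_or_lt_of_le h with h1 | h1
        · subst h1
          rw [dif_pos le_rfl, S.π_id]
        · rw [dif_neg (by omega : ¬ 0 ≤ β)]
      have hstep : ∀ β : ℤ, S.π α (by omega : β ≤ β + 1) (x (β + 1)) = x β := by
        intro β
        rcases le_or_gt 0 β with h | h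
        · rw [hxpos (β + 1) (by omega), hxpos β h, map_add]
          have h3 : (r β).val = (S.π α (by omega : β ≤ β + 1) (x' (β + 1)) - x' β)
              + S.π α (by omega : β ≤ β + 1) ((r (β + 1)).val) :=
            congrArg Subtype.val (hr β h)
          rw [h3]
          abel
        · rw [hxneg (β + 1) (by omega), hxneg β (by omega), S.π_comp]
      have hcoh : ∀ (β β' : ℤ) (h : β ≤ β'), S.π α h (x β') = x β := by
        intro β
        have key : ∀ β' : ℤ, β ≤ β' → ∀ h : β ≤ β', S.π α h (x β') = x β := by
          refine Int.le_induction ?_ ?_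
          · intro h
            exact S.π_id α β (x β)
          · intro n hn ih h
            rw [← ih hn, ← hstep n, S.π_comp]
        exact fun β' h => key β' h h
      have htoc : ∀ β, S.toColim α β (x β) = y.val β := by
        intro β
        have h0 : S.toColim α 0 (x' 0 + (r 0).val) = y.val 0 := by
          have hk := (r 0).prop
          rw [LinearMap.mem_ker] at hk
          rw [map_add, hk, add_zero, hx']
        rcases le_or_gt 0 β with h | h
        · have hk := (r β).prop
          rw [LinearMap.mem_ker] at hk
          rw [hxpos β h, map_add, hk, add_zero, hx']
        · rw [hxneg β (by omega)]
          rw [show S.toColim α β (S.π α (by omega : β ≤ (0:ℤ)) (x' 0 + (r 0).val))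
              = S.colimUpperMap (by omega : β ≤ (0:ℤ)) (S.toColim α 0 (x' 0 + (r 0).val)) from
            (S.colimUpperMap_of _ _).symm, h0]
          exact y.prop β 0 (by omega)
      refine ⟨Module.DirectLimit.of ℂ ℤ (fun α => S.lowerLim α)
        (fun _ _ h => S.lowerLimMap h) α ⟨x, fun β β' h => hcoh β β' h⟩, ?_⟩
      rw [S.kappa_of]
      apply Subtype.ext; funext β
      exact htoc β
    · -- e₃ ∘ κ = 0
      rintro ⟨z, rfl⟩
      refine Module.DirectLimit.induction_on z ?_
      intro α g
      rw [S.kappa_of]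
      show Module.DirectLimit.of ℂ ℤ (fun α => (cokerSystem S).lowerLim α)
        (fun _ _ h => (cokerSystem S).lowerLimMap h) 0
          (S.cokerFam 0 (S.lowerLimToLimColim α g)) = 0
      have h1 : Module.DirectLimit.of ℂ ℤ (fun α => (cokerSystem S).lowerLim α)
          (fun _ _ h => (cokerSystem S).lowerLimMap h) 0
            (S.cokerFam 0 (S.lowerLimToLimColim α g))
          = Module.DirectLimit.of ℂ ℤ (fun α => (cokerSystem S).lowerLim α)
          (fun _ _ h => (cokerSystem S).lowerLimMap h) (max 0 α)
            ((cokerSystem S).lowerLimMap (le_max_left 0 α)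
              (S.cokerFam 0 (S.lowerLimToLimColim α g))) :=
        (Module.DirectLimit.of_f (hij := le_max_left 0 α)).symm
      have hz : (cokerSystem S).lowerLimMap (le_max_left 0 α)
          (S.cokerFam 0 (S.lowerLimToLimColim α g)) = 0 := by
        apply Subtype.ext; funext β
        show (cokerSystem S).ι (le_max_left 0 α) β
          ((S.cokerFam 0 (S.lowerLimToLimColim α g)).val β) = 0
        rw [show (S.cokerFam 0 (S.lowerLimToLimColim α g)).val β
            = (Submodule.Quotient.mk (S.toColim α β (g.val β)) :
              S.colimUpper β ⧸ LinearMap.range (S.toColim 0 β)) from rfl,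
          S.cokerSystem_ι_mk]
        refine (Submodule.Quotient.mk_eq_zero _).mpr ?_
        refine ⟨S.ι (le_max_right 0 α) β (g.val β), ?_⟩
        exact Module.DirectLimit.of_f
      rw [h1, hz, map_zero]
  · -- surjectivity of e₃
    intro z
    refine Module.DirectLimit.induction_on z ?_
    intro α c
    have hmk : ∀ β, ∃ w : S.colimUpper β, (Submodule.Quotient.mk w :
        S.colimUpper β ⧸ LinearMap.range (S.toColim α β)) = c.val β := fun β =>
      Submodule.Quotient.mk_surjective _ (c.val β)
    choose g' hg' using hmk
    have hdfm : ∀ β : ℤ, S.colimUpperMap (by omega : β ≤ β + 1) (g' (β + 1)) - g' β ∈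
        LinearMap.range (S.toColim α β) := by
      intro β
      rw [← Submodule.Quotient.mk_eq_zero, Submodule.Quotient.mk_sub, sub_eq_zero, hg']
      have h2 : (Submodule.Quotient.mk (S.colimUpperMap (by omega : β ≤ β + 1) (g' (β + 1))) :
          S.colimUpper β ⧸ LinearMap.range (S.toColim α β))
          = (cokerSystem S).π α (by omega : β ≤ β + 1)
            (Submodule.Quotient.mk (g' (β + 1))) := (S.cokerSystem_π_mk α _ _).symm
      rw [h2, hg' (β + 1)]
      exact (c.prop β (β + 1) (by omega))
    obtain ⟨r, hr⟩ := ml_solve (fun β => LinearMap.range (S.toColim α β))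
      (fun β => (S.colimUpperMap (by omega : β ≤ β + 1)).restrict (fun z hz => by
        obtain ⟨w, rfl⟩ := hz
        exact ⟨S.π α (by omega : β ≤ β + 1) w, (S.colimUpperMap_of _ _).symm⟩))
      (fun β => ⟨_, hdfm β⟩)
    obtain ⟨g, hgpos, hgneg⟩ : ∃ g : ∀ β : ℤ, S.colimUpper β,
        (∀ β : ℤ, 0 ≤ β → g β = g' β + (r β).val) ∧
        (∀ β : ℤ, ∀ h : β ≤ 0, g β = S.colimUpperMap h (g' 0 + (r 0).val)) := by
      refine ⟨fun β => if h : 0 ≤ β then g' β + (r β).val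
        else S.colimUpperMap (le_of_not_ge h) (g' 0 + (r 0).val), fun β h => dif_pos h, ?_⟩
      intro β h
      beta_reduce
      rcases eq_or_lt_of_le h with h1 | h1
      · subst h1
        rw [dif_pos le_rfl, S.colimUpperMap_id]
      · rw [dif_neg (by omega : ¬ 0 ≤ β)]
    have hstep : ∀ β : ℤ, S.colimUpperMap (by omega : β ≤ β + 1) (g (β + 1)) = g β := by
      intro β
      rcases le_or_gt 0 β with h | h
      · rw [hgpos (β + 1) (by omega), hgpos β h, map_add]
        have h3 : (r β).val = (S.colimUpperMap (by omega : β ≤ β + 1) (g' (β + 1)) - g' β)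
            + S.colimUpperMap (by omega : β ≤ β + 1) ((r (β + 1)).val) :=
          congrArg Subtype.val (hr β h)
        rw [h3]
        abel
      · rw [hgneg (β + 1) (by omega), hgneg β (by omega), S.colimUpperMap_comp]
    have hcoh : ∀ (β β' : ℤ) (h : β ≤ β'), S.colimUpperMap h (g β') = g β := by
      intro β
      have key : ∀ β' : ℤ, β ≤ β' → ∀ h : β ≤ β', S.colimUpperMap h (g β') = g β := by
        refine Int.le_induction ?_ ?_
        · intro h
          exact S.colimUpperMap_id β (g β)
        · intro n hn ih h
          rw [← ih hn, ← hstep n, S.colimUpperMap_comp]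
      exact fun β' h => key β' h h
    have hmkg : ∀ β : ℤ, (Submodule.Quotient.mk (g β) :
        S.colimUpper β ⧸ LinearMap.range (S.toColim α β)) = c.val β := by
      have hmk0 : ∀ β : ℤ, 0 ≤ β → (Submodule.Quotient.mk (g β) :
          S.colimUpper β ⧸ LinearMap.range (S.toColim α β)) = c.val β := by
        intro β h
        rw [hgpos β h, ← hg' β, Submodule.Quotient.eq]
        simpa using (r β).prop
      intro β
      rcases le_or_gt 0 β with h | h
      · exact hmk0 β h
      · rw [show g β = S.colimUpperMap (by omega : β ≤ (0:ℤ)) (g 0) from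
          (hcoh β 0 (by omega)).symm]
        have h2 : (Submodule.Quotient.mk (S.colimUpperMap (by omega : β ≤ (0:ℤ)) (g 0)) :
            S.colimUpper β ⧸ LinearMap.range (S.toColim α β))
            = (cokerSystem S).π α (by omega : β ≤ (0:ℤ)) (Submodule.Quotient.mk (g 0)) :=
          (S.cokerSystem_π_mk α _ _).symm
        rw [h2, hmk0 0 le_rfl]
        exact c.prop β 0 (by omega)
    refine ⟨⟨g, fun β β' h => hcoh β β' h⟩, ?_⟩
    show Module.DirectLimit.of ℂ ℤ (fun α => (cokerSystem S).lowerLim α)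
      (fun _ _ h => (cokerSystem S).lowerLimMap h) 0
        (S.cokerFam 0 ⟨g, fun β β' h => hcoh β β' h⟩)
      = Module.DirectLimit.of ℂ ℤ (fun α => (cokerSystem S).lowerLim α)
        (fun _ _ h => (cokerSystem S).lowerLimMap h) α c
    have h1 : Module.DirectLimit.of ℂ ℤ (fun α => (cokerSystem S).lowerLim α)
        (fun _ _ h => (cokerSystem S).lowerLimMap h) 0
          (S.cokerFam 0 ⟨g, fun β β' h => hcoh β β' h⟩)
        = Module.DirectLimit.of ℂ ℤ (fun α => (cokerSystem S).lowerLim α)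
        (fun _ _ h => (cokerSystem S).lowerLimMap h) (max 0 α)
          ((cokerSystem S).lowerLimMap (le_max_left 0 α)
            (S.cokerFam 0 ⟨g, fun β β' h => hcoh β β' h⟩)) :=
      (Module.DirectLimit.of_f (hij := le_max_left 0 α)).symm
    have h2 : Module.DirectLimit.of ℂ ℤ (fun α => (cokerSystem S).lowerLim α)
        (fun _ _ h => (cokerSystem S).lowerLimMap h) α c
        = Module.DirectLimit.of ℂ ℤ (fun α => (cokerSystem S).lowerLim α)
        (fun _ _ h => (cokerSystem S).lowerLimMap h) (max 0 α)
          ((cokerSystem S).lowerLimMap (le_max_right 0 α) c) :=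
      (Module.DirectLimit.of_f (hij := le_max_right 0 α)).symm
    rw [h1, h2]
    congr 1
    apply Subtype.ext; funext β
    show (cokerSystem S).ι (le_max_left 0 α) β
        ((S.cokerFam 0 ⟨g, fun β β' h => hcoh β β' h⟩).val β)
      = (cokerSystem S).ι (le_max_right 0 α) β (c.val β)
    rw [show (S.cokerFam 0 ⟨g, fun β β' h => hcoh β β' h⟩).val β
        = (Submodule.Quotient.mk (g β) :
          S.colimUpper β ⧸ LinearMap.range (S.toColim 0 β)) from rfl]
    rw [← hmkg β]
    rw [S.cokerSystem_ι_mk, S.cokerSystem_ι_mk]
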